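/- Let (X, 𝒜, μ) be a σ-finite measure space, S : X → X a measurable nonsingular map, and P the Frobenius–Perron operator associated with S. Suppose there exist a density ϑ and a density ℓ such that the iterates satisfy Pⁿϑ ≤ ℓ μ-a.e. for every n ≥ 0. Then P has a stationary density, i.e. there exists a density ϑ⋆ with Pϑ⋆ = ϑ⋆ μ-a.e. -/

import Mathlib

open MeasureTheory Filter Topology

/-- Let `(X, 𝒜, μ)` be a σ-finite measure space, `S : X → X` a measurable
nonsingular map, and `P` the Frobenius–Perron operator associated with `S`.  If there exist
densities `ϑ` and `ℓ` such that `Pⁿϑ ≤ ℓ` μ-a.e. for every `n ≥ 0`, then `P` has a stationary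
density. -/
theorem dominated_iterates_implies_stationary_density
    {X : Type*} [MeasurableSpace X] (μ : Measure X) [SigmaFinite μ]
    (S : X → X) (hS : Measurable S)
    (hns : ∀ A : Set X, MeasurableSet A → μ A = 0 → μ (S ⁻¹' A) = 0)
    (P : (X → ℝ) → (X → ℝ))
    (hP : ∀ f : X → ℝ, Integrable f μ → 0 ≤ᵐ[μ] f →
      Integrable (P f) μ ∧ 0 ≤ᵐ[μ] P f ∧
      ∀ A : Set X, MeasurableSet A → ∫ x in A, P f x ∂μ = ∫ x in S ⁻¹' A, f x ∂μ)
    (ϑ ℓ : X → ℝ)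
    (hϑi : Integrable ϑ μ) (hϑ0 : 0 ≤ᵐ[μ] ϑ) (hϑ1 : ∫ x, ϑ x ∂μ = 1)
    (hℓi : Integrable ℓ μ) (hℓ0 : 0 ≤ᵐ[μ] ℓ) (hℓ1 : ∫ x, ℓ x ∂μ = 1)
    (hdom : ∀ n : ℕ, (P^[n] ϑ) ≤ᵐ[μ] ℓ) :
    ∃ ϑs : X → ℝ, Integrable ϑs μ ∧ 0 ≤ᵐ[μ] ϑs ∧ (∫ x, ϑs x ∂μ = 1) ∧
      P ϑs =ᵐ[μ] ϑs := by
  classical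
  set U : Filter ℕ := (↑(hyperfilter ℕ) : Filter ℕ) with hUdef
  have hUne : U.NeBot := Ultrafilter.neBot _
  -- basic facts about the iterates
  have hiter : ∀ n : ℕ, Integrable (P^[n] ϑ) μ ∧ 0 ≤ᵐ[μ] (P^[n] ϑ) := by
    intro n
    induction n with
    | zero => exact ⟨hϑi, hϑ0⟩
    | succ n ih =>
      rw [Function.iterate_succ_apply']
      exact ⟨(hP _ ih.1 ih.2).1, (hP _ ih.1 ih.2).2.1⟩
  have hstep : ∀ (n : ℕ) (A : Set X), MeasurableSet A →
      ∫ x in A, (P^[n + 1] ϑ) x ∂μ = ∫ x in S ⁻¹' A, (P^[n] ϑ) x ∂μ := by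
    intro n A hA
    rw [Function.iterate_succ_apply']
    exact (hP _ (hiter n).1 (hiter n).2).2.2 A hA
  have hmass : ∀ n : ℕ, ∫ x, (P^[n] ϑ) x ∂μ = 1 := by
    intro n
    induction n with
    | zero => simpa using hϑ1
    | succ n ih =>
      have h := hstep n Set.univ MeasurableSet.univ
      rw [Set.preimage_univ, setIntegral_univ, setIntegral_univ] at h
      rw [h]; exact ih
  -- the sequence of measures ν n and its Cesàro averages c n
  set ν : ℕ → Set X → ℝ := fun n A => ∫ x in A, (P^[n] ϑ) x ∂μ with hνdef
  have hν0 : ∀ n (A : Set X), 0 ≤ ν n A := fun n A =>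
    integral_nonneg_of_ae (ae_restrict_of_ae (hiter n).2)
  have hν1 : ∀ n (A : Set X), ν n A ≤ 1 := fun n A =>
    le_of_le_of_eq (setIntegral_le_integral (hiter n).1 (hiter n).2) (hmass n)
  have hνℓ : ∀ n (A : Set X), ν n A ≤ ∫ x in A, ℓ x ∂μ := fun n A =>
    setIntegral_mono_ae (hiter n).1.integrableOn hℓi.integrableOn (hdom n)
  have hνrec : ∀ n (A : Set X), MeasurableSet A → ν (n + 1) A = ν n (S ⁻¹' A) :=
    fun n A hA => hstep n A hA
  set c : ℕ → Set X → ℝ := fun n A => (∑ k ∈ Finset.range (n + 1), ν k A) / ((n : ℝ) + 1)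
    with hcdef
  have hc01 : ∀ n (A : Set X), c n A ∈ Set.Icc (0 : ℝ) 1 := by
    intro n A
    constructor
    · exact div_nonneg (Finset.sum_nonneg fun k _ => hν0 k A) (by positivity)
    · show _ / _ ≤ (1 : ℝ)
      rw [div_le_one (by positivity)]
      have h := Finset.sum_le_sum (fun k (_ : k ∈ Finset.range (n + 1)) => hν1 k A)
      simpa [Finset.sum_const, Finset.card_range] using h
  -- generalized limit along a nonprincipal ultrafilter
  have key : ∀ u : ℕ → ℝ, (∀ n, u n ∈ Set.Icc (0 : ℝ) 1) →
      ∃ a, a ∈ Set.Icc (0 : ℝ) 1 ∧ Tendsto u U (𝓝 a) := by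
    intro u hu
    obtain ⟨a, ha, hle⟩ := (isCompact_Icc (a := (0 : ℝ)) (b := 1)).ultrafilter_le_nhds
      ((hyperfilter ℕ).map u)
      (by
        rw [le_principal_iff, Ultrafilter.coe_map, mem_map]
        exact univ_mem' hu)
    refine ⟨a, ha, ?_⟩
    rwa [Ultrafilter.coe_map] at hle
  choose Λ hΛmem hΛt using fun A : Set X => key (fun n => c n A) (fun n => hc01 n A)
  have huniq : ∀ (A : Set X) (b : ℝ), Tendsto (fun n => c n A) U (𝓝 b) → Λ A = b :=
    fun A b h => tendsto_nhds_unique (hΛt A) h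
  have hΛ0 : ∀ A : Set X, 0 ≤ Λ A := fun A => (hΛmem A).1
  have hcε : ∀ n, c n (∅ : Set X) = 0 := by
    intro n; simp [hcdef, hνdef]
  have hΛempty : Λ (∅ : Set X) = 0 := by
    refine huniq _ _ ?_
    simp only [hcε]
    exact tendsto_const_nhds
  have hνu : ∀ k, ν k (Set.univ : Set X) = 1 := by
    intro k; simp only [hνdef]; rw [setIntegral_univ]; exact hmass k
  have hΛuniv : Λ (Set.univ : Set X) = 1 := by
    refine huniq _ _ ?_
    have hcu : ∀ n, c n (Set.univ : Set X) = 1 := by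
      intro n
      simp only [hcdef, hνu]
      rw [Finset.sum_const, Finset.card_range, nsmul_eq_mul, mul_one]
      push_cast
      rw [div_self (by positivity)]
    simp only [hcu]
    exact tendsto_const_nhds
  have hΛadd : ∀ A B : Set X, Disjoint A B → MeasurableSet B → Λ (A ∪ B) = Λ A + Λ B := by
    intro A B hAB hB
    refine huniq _ _ ?_
    have hceq : ∀ n, c n (A ∪ B) = c n A + c n B := by
      intro n
      simp only [hcdef, hνdef]
      rw [← add_div, ← Finset.sum_add_distrib]
      congr 1
      refine Finset.sum_congr rfl fun k _ => ?_
      exact setIntegral_union hAB hB (hiter k).1.integrableOn (hiter k).1.integrableOn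
    simp only [hceq]
    exact (hΛt A).add (hΛt B)
  have hΛleℓ : ∀ A : Set X, Λ A ≤ ∫ x in A, ℓ x ∂μ := by
    intro A
    refine le_of_tendsto (hΛt A) (Eventually.of_forall fun n => ?_)
    show _ / _ ≤ _
    rw [div_le_iff₀ (by positivity)]
    have h := Finset.sum_le_sum (fun k (_ : k ∈ Finset.range (n + 1)) => hνℓ k A)
    simp only [Finset.sum_const, Finset.card_range, nsmul_eq_mul] at h
    calc ∑ k ∈ Finset.range (n + 1), ν k A ≤ ((n : ℝ) + 1) * ∫ x in A, ℓ x ∂μ := by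
          push_cast at h; linarith
      _ = (∫ x in A, ℓ x ∂μ) * ((n : ℝ) + 1) := mul_comm _ _
  -- invariance of Λ under S
  have hΛinv : ∀ A : Set X, MeasurableSet A → Λ (S ⁻¹' A) = Λ A := by
    intro A hA
    have hsum : ∀ n, c n (S ⁻¹' A) = c n A + (ν (n + 1) A - ν 0 A) / ((n : ℝ) + 1) := by
      intro n
      have e0 : ∀ k, ν k (S ⁻¹' A) = ν (k + 1) A := fun k => (hνrec k A hA).symm
      have hnum : ∑ k ∈ Finset.range (n + 1), ν (k + 1) A =
          ∑ k ∈ Finset.range (n + 1), ν k A + (ν (n + 1) A - ν 0 A) := by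
        have h1 := Finset.sum_range_succ' (fun k => ν k A) (n + 1)
        have h2 := Finset.sum_range_succ (fun k => ν k A) (n + 1)
        linarith
      show (∑ k ∈ Finset.range (n + 1), ν k (S ⁻¹' A)) / ((n : ℝ) + 1) = _
      simp only [e0]
      rw [hnum, add_div]
    have hd0 : Tendsto (fun n => (ν (n + 1) A - ν 0 A) / ((n : ℝ) + 1)) U (𝓝 0) := by
      refine Tendsto.mono_left ?_ Nat.hyperfilter_le_atTop
      refine squeeze_zero_norm (fun n => ?_) tendsto_one_div_add_atTop_nhds_zero_nat
      have h1 : |ν (n + 1) A - ν 0 A| ≤ 1 :=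
        abs_le.mpr ⟨by linarith [hν0 (n + 1) A, hν1 0 A], by linarith [hν1 (n + 1) A, hν0 0 A]⟩
      rw [norm_div, Real.norm_eq_abs, Real.norm_eq_abs, abs_of_pos (by positivity : (0:ℝ) < (n:ℝ)+1)]
      rw [div_le_div_iff₀ (by positivity) (by positivity)]
      nlinarith [abs_nonneg (ν (n + 1) A - ν 0 A)]
    have ht : Tendsto (fun n => c n (S ⁻¹' A)) U (𝓝 (Λ A + 0)) := by
      simp only [hsum]
      exact (hΛt A).add hd0
    simpa using huniq _ _ ht
  -- countable additivity
  have hΛiUnion : ∀ (A : ℕ → Set X), (∀ i, MeasurableSet (A i)) → Pairwise (Function.onFun Disjoint A) →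
      HasSum (fun i => Λ (A i)) (Λ (⋃ i, A i)) := by
    intro A hA hd
    rw [hasSum_iff_tendsto_nat_of_nonneg (fun i => hΛ0 (A i))]
    have hBsum : ∀ N, Λ (⋃ k, ⋃ (_ : k < N), A k) = ∑ i ∈ Finset.range N, Λ (A i) := by
      intro N
      induction N with
      | zero =>
        rw [show (⋃ k, ⋃ (_ : k < 0), A k) = (∅ : Set X) by simp]
        simpa using hΛempty
      | succ N ih =>
        have hdisj : Disjoint (⋃ k, ⋃ (_ : k < N), A k) (A N) := by
          refine Set.disjoint_iUnion_left.mpr fun k => ?_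
          refine Set.disjoint_iUnion_left.mpr fun hk => ?_
          exact hd (Nat.ne_of_lt hk)
        rw [Set.biUnion_lt_succ, hΛadd _ _ hdisj (hA N), ih, Finset.sum_range_succ]
    have htail : ∀ N, Λ (⋃ i, A i) = ∑ i ∈ Finset.range N, Λ (A i) + Λ (⋃ k, A (k + N)) := by
      intro N
      have hsplit : (⋃ i, A i) = (⋃ k, ⋃ (_ : k < N), A k) ∪ ⋃ k, A (k + N) := by
        ext x
        simp only [Set.mem_iUnion, Set.mem_union]
        constructor
        · rintro ⟨i, hi⟩
          rcases lt_or_ge i N with h | h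
          · exact Or.inl ⟨i, h, hi⟩
          · exact Or.inr ⟨i - N, by rwa [Nat.sub_add_cancel h]⟩
        · rintro (⟨i, _, hi⟩ | ⟨k, hk⟩)
          exacts [⟨i, hi⟩, ⟨k + N, hk⟩]
      have hdisj : Disjoint (⋃ k, ⋃ (_ : k < N), A k) (⋃ k, A (k + N)) := by
        refine Set.disjoint_iUnion_left.mpr fun k => ?_
        refine Set.disjoint_iUnion_left.mpr fun hk => ?_
        refine Set.disjoint_iUnion_right.mpr fun j => ?_
        exact hd (by omega : k ≠ j + N)
      rw [hsplit, hΛadd _ _ hdisj (MeasurableSet.iUnion fun k => hA (k + N)), hBsum N]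
    have hℓtail : Tendsto (fun N => ∫ x in (⋃ k, A (k + N)), ℓ x ∂μ) atTop (𝓝 0) := by
      have hts : ∀ N, ∫ x in (⋃ k, A (k + N)), ℓ x ∂μ =
          ∑' k, ∫ x in A (k + N), ℓ x ∂μ := by
        intro N
        exact (hasSum_integral_iUnion (fun k => hA (k + N))
          (fun i j hij => hd (by omega : i + N ≠ j + N)) hℓi.integrableOn).tsum_eq.symm
      simp only [hts]
      exact _root_.tendsto_sum_nat_add fun k => ∫ x in A k, ℓ x ∂μ
    have hΛtail0 : Tendsto (fun N => Λ (⋃ k, A (k + N))) atTop (𝓝 0) :=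
      squeeze_zero (fun N => hΛ0 _) (fun N => hΛleℓ _) hℓtail
    have heq : ∀ N, ∑ i ∈ Finset.range N, Λ (A i) = Λ (⋃ i, A i) - Λ (⋃ k, A (k + N)) := by
      intro N; have := htail N; linarith
    simp only [heq]
    simpa using tendsto_const_nhds.sub hΛtail0
  -- the measure
  have hm0 : (fun (A : Set X) (_ : MeasurableSet A) => ENNReal.ofReal (Λ A)) ∅
      MeasurableSet.empty = 0 := by simp [hΛempty]
  have hmU : ∀ ⦃f : ℕ → Set X⦄ (h : ∀ i, MeasurableSet (f i)), Pairwise (Function.onFun Disjoint f) →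
      (fun (A : Set X) (_ : MeasurableSet A) => ENNReal.ofReal (Λ A)) (⋃ i, f i)
        (MeasurableSet.iUnion h) =
      ∑' i, (fun (A : Set X) (_ : MeasurableSet A) => ENNReal.ofReal (Λ A)) (f i) (h i) := by
    intro f h hd
    have hs := hΛiUnion f h hd
    simp only
    rw [← ENNReal.ofReal_tsum_of_nonneg (fun i => hΛ0 (f i)) hs.summable, hs.tsum_eq]
  set m : Measure X := Measure.ofMeasurable
    (fun (A : Set X) (_ : MeasurableSet A) => ENNReal.ofReal (Λ A)) hm0 hmU with hmdef
  have hmap : ∀ A : Set X, MeasurableSet A → m A = ENNReal.ofReal (Λ A) := fun A hA =>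
    Measure.ofMeasurable_apply A hA
  have hmfin : IsFiniteMeasure m :=
    ⟨by rw [hmap _ MeasurableSet.univ]; exact ENNReal.ofReal_lt_top⟩
  have hmac : m ≪ μ := by
    refine Measure.AbsolutelyContinuous.mk fun A hA h0 => ?_
    rw [hmap A hA, ENNReal.ofReal_eq_zero]
    have h1 : ∫ x in A, ℓ x ∂μ = 0 := by
      rw [Measure.restrict_eq_zero.mpr h0, integral_zero_measure]
    have := hΛleℓ A
    linarith
  -- the stationary density
  set g : X → ℝ := fun x => (m.rnDeriv μ x).toReal with hgdef
  have hgint : Integrable g μ := Measure.integrable_toReal_rnDeriv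
  have hg0 : 0 ≤ᵐ[μ] g := Eventually.of_forall fun x => ENNReal.toReal_nonneg
  have hgset : ∀ A : Set X, MeasurableSet A → ∫ x in A, g x ∂μ = (m A).toReal := by
    intro A hA
    simp only [hgdef]
    rw [integral_toReal ((Measure.measurable_rnDeriv m μ).aemeasurable)
      (ae_restrict_of_ae (Measure.rnDeriv_lt_top m μ)),
      Measure.setLIntegral_rnDeriv' hmac hA]
  have hg1 : ∫ x, g x ∂μ = 1 := by
    have h := hgset Set.univ MeasurableSet.univ
    rw [setIntegral_univ] at h
    rw [h, hmap _ MeasurableSet.univ, hΛuniv]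
    simp
  obtain ⟨hPg, hPg0, hPgset⟩ := hP g hgint hg0
  have hfix : P g =ᵐ[μ] g := by
    refine Integrable.ae_eq_of_forall_setIntegral_eq _ _ hPg hgint fun A hA _ => ?_
    rw [hPgset A hA, hgset A hA, hgset (S ⁻¹' A) (hS hA), hmap A hA, hmap _ (hS hA),
      hΛinv A hA]
  exact ⟨g, hgint, hg0, hg1, hfix⟩
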